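/- For every a in (0,1) and every odd positive integer k, the function h_{a,k}(x) = ψ⁽ᵏ⁾(x+a) - ψ⁽ᵏ⁾(x) - a·k!/x^{k+1} satisfies (-1)ⁿ (-h_{a,k})⁽ⁿ⁾(x) > 0 for all x > 0 and all nonnegative integers n, i.e., -h_{a,k} is strictly completely monotonic on (0, ∞). -/

import Mathlib

noncomputable def digamma : ℝ → ℝ := deriv (fun x => Real.log (Real.Gamma x))

noncomputable def polygamma (n : ℕ) : ℝ → ℝ := deriv^[n] digamma

open Filter Topology Finset Real

set_option maxHeartbeats 1000000


noncomputable def Sf (m : ℕ) (x : ℝ) : ℝ := ∑' j : ℕ, ((x + j) ^ m)⁻¹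

lemma summable_Sf {l : ℝ} (hl : 0 < l) {m : ℕ} (hm : 2 ≤ m) :
    Summable (fun j : ℕ => ((l + j) ^ m)⁻¹) := by
  rw [← summable_nat_add_iff 1]
  have h2 : Summable (fun j : ℕ => (((j : ℝ) + 1) ^ 2)⁻¹) := by
    have := (summable_nat_add_iff (f := fun n : ℕ => ((n : ℝ) ^ 2)⁻¹) 1).2
      (Real.summable_nat_pow_inv.2 one_lt_two)
    simpa using this
  refine h2.of_nonneg_of_le (fun j => by positivity) (fun j => ?_)
  have h1 : (1 : ℝ) ≤ (j : ℝ) + 1 := by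
    have : (0:ℝ) ≤ (j:ℝ) := Nat.cast_nonneg j
    linarith
  have hle : ((j : ℝ) + 1) ^ 2 ≤ (l + ((j : ℕ) + 1 : ℕ)) ^ m := by
    calc ((j : ℝ) + 1) ^ 2 ≤ ((j : ℝ) + 1) ^ m := pow_le_pow_right₀ h1 hm
    _ ≤ (l + ((j : ℕ) + 1 : ℕ)) ^ m := by
        apply pow_le_pow_left₀ (by positivity)
        push_cast; linarith
  exact inv_anti₀ (by positivity) hle

lemma Sf_mono_le {l y : ℝ} (hl : 0 < l) (hly : l ≤ y) (m j : ℕ) :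
    ((y + j) ^ m)⁻¹ ≤ ((l + j) ^ m)⁻¹ := by
  apply inv_anti₀ (by positivity)
  apply pow_le_pow_left₀ (by positivity)
  linarith

lemma hasDerivAt_inv_pow {m : ℕ} (hm : 1 ≤ m) {z : ℝ} (hz : 0 < z) :
    HasDerivAt (fun y : ℝ => (y ^ m)⁻¹) (-(m : ℝ) * (z ^ (m + 1))⁻¹) z := by
  have h := (hasDerivAt_pow m z).inv (by positivity)
  convert h using 1
  · rfl
  · rfl
  · rfl
  have hzz : z ≠ 0 := hz.ne'
  have hpow : z ^ (m - 1) * z ^ (m + 1) = (z ^ m) ^ 2 := by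
    rw [← pow_add, ← pow_mul]
    congr 1
    omega
  field_simp
  rw [← hpow]
  ring




lemma hasDerivAt_Sf {m : ℕ} (hm : 2 ≤ m) {x : ℝ} (hx : 0 < x) :
    HasDerivAt (Sf m) (-(m : ℝ) * Sf (m + 1) x) x := by
  have hl : 0 < x / 2 := by linarith
  have hmem : x ∈ Set.Ioo (x / 2) (x + 1) := by constructor <;> linarith
  have key := hasDerivAt_tsum_of_isPreconnected
    (F := ℝ) (u := fun j : ℕ => (m : ℝ) * ((x / 2 + j) ^ (m + 1))⁻¹)
    (g := fun (j : ℕ) (y : ℝ) => ((y + j) ^ m)⁻¹)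
    (g' := fun (j : ℕ) (y : ℝ) => -(m : ℝ) * ((y + j) ^ (m + 1))⁻¹)
    ((summable_Sf hl (by omega)).mul_left _)
    (isOpen_Ioo (a := x / 2) (b := x + 1)) (convex_Ioo _ _).isPreconnected
    (fun j y hy => ?_) (fun j y hy => ?_) hmem ?_ hmem
  · have : (∑' j : ℕ, -(m : ℝ) * ((x + j) ^ (m + 1))⁻¹) = -(m : ℝ) * Sf (m + 1) x := by
      rw [Sf, tsum_mul_left]
    rw [← this]
    exact key
  · -- HasDerivAt term
    have hz : 0 < y + (j : ℝ) := by
      have : (0:ℝ) ≤ (j:ℝ) := Nat.cast_nonneg j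
      have := hy.1; nlinarith
    exact (hasDerivAt_inv_pow (by omega) hz).comp_add_const y (j : ℝ)
  · -- bound
    have hz : 0 < y + (j : ℝ) := by
      have : (0:ℝ) ≤ (j:ℝ) := Nat.cast_nonneg j
      have := hy.1; nlinarith
    rw [Real.norm_eq_abs, abs_mul, abs_neg, Nat.abs_cast, abs_inv, abs_of_pos (by positivity)]
    exact mul_le_mul_of_nonneg_left (Sf_mono_le hl hy.1.le _ _) (Nat.cast_nonneg m)
  · exact summable_Sf hx hm





noncomputable def Dg (y : ℝ) : ℝ :=
  -Real.eulerMascheroniConstant - ∑' m : ℕ, ((y + m)⁻¹ - ((m : ℝ) + 1)⁻¹)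

lemma term_eq {y : ℝ} (hy : 0 < y) (m : ℕ) :
    (y + m)⁻¹ - ((m : ℝ) + 1)⁻¹ = (1 - y) * ((y + m) * ((m : ℝ) + 1))⁻¹ := by
  have h1 : (0:ℝ) < y + m := by positivity
  have h2 : (0:ℝ) < (m:ℝ) + 1 := by positivity
  field_simp
  ring

lemma term_bound {l u y : ℝ} (hl : 0 < l) (hy : y ∈ Set.Ioo l u) (m : ℕ) :
    ‖(y + m)⁻¹ - ((m : ℝ) + 1)⁻¹‖ ≤ (1 + u) * ((l + m) * ((m : ℝ) + 1))⁻¹ := by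
  have hy0 : 0 < y := lt_trans hl hy.1
  have hu : 0 < u := lt_trans hy0 hy.2
  rw [term_eq hy0, Real.norm_eq_abs, abs_mul, abs_inv,
    abs_of_pos (by positivity : (0:ℝ) < (y + m) * ((m : ℝ) + 1))]
  apply mul_le_mul
  · rw [abs_le]; constructor <;> [linarith [hy.2]; linarith [hy0]]
  · apply inv_anti₀ (by positivity)
    have := hy.1
    have hm : (0:ℝ) ≤ (m:ℝ) := Nat.cast_nonneg m
    nlinarith
  · positivity
  · positivity

lemma summable_lm {l : ℝ} (hl : 0 < l) :
    Summable (fun m : ℕ => ((l + m) * ((m : ℝ) + 1))⁻¹) := by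
  have h2 := summable_Sf (one_pos) (le_refl 2)
  refine (h2.mul_left (min l 1)⁻¹).of_nonneg_of_le (fun m => by positivity) (fun m => ?_)
  have hm : (0:ℝ) ≤ (m:ℝ) := Nat.cast_nonneg m
  have c : 0 < min l 1 := by positivity
  have h3 : min l 1 * ((m:ℝ) + 1) ≤ l + m := by
    rcases le_total l 1 with h | h
    · rw [min_eq_left h]; nlinarith
    · rw [min_eq_right h]; nlinarith
  rw [← mul_inv]
  apply inv_anti₀ (by positivity)
  have : ((1:ℝ) + m) ^ 2 = ((m:ℝ)+1) * ((m:ℝ)+1) := by ring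
  rw [this, ← mul_assoc]
  exact mul_le_mul_of_nonneg_right h3 (by positivity)

lemma summable_term {y : ℝ} (hy : 0 < y) :
    Summable (fun m : ℕ => ((y + m)⁻¹ - ((m : ℝ) + 1)⁻¹)) := by
  refine Summable.of_norm_bounded (((summable_lm (show 0 < y/2 by linarith)).mul_left (1 + (y+1)))) ?_
  intro m
  exact term_bound (by linarith) (by constructor <;> linarith) m

lemma tendsto_c :
    Tendsto (fun n : ℕ => Real.log n - (harmonic (n + 1) : ℝ)) atTop
      (𝓝 (-Real.eulerMascheroniConstant)) := by
  have hA : Tendsto (fun n : ℕ => (harmonic (n + 1) : ℝ) - Real.log (n + 1)) atTop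
      (𝓝 Real.eulerMascheroniConstant) := by
    have h := Real.tendsto_harmonic_sub_log.comp (tendsto_add_atTop_nat 1)
    refine h.congr fun n => ?_
    simp only [Function.comp_apply]
    push_cast
    ring
  have hB := Real.tendsto_log_nat_add_one_sub_log
  have := (hA.add hB).neg
  rw [add_zero] at this
  refine this.congr (fun n => ?_)
  push_cast
  ring

lemma hasDerivAt_logGammaSeq (n : ℕ) {y : ℝ} (hy : 0 < y) :
    HasDerivAt (fun z => Real.BohrMollerup.logGammaSeq z n)
      ((Real.log n - (harmonic (n + 1) : ℝ))
        - ∑ m ∈ range (n + 1), ((y + m)⁻¹ - ((m : ℝ) + 1)⁻¹)) y := by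
  have hsum : ∀ m ∈ range (n + 1), HasDerivAt (fun z : ℝ => Real.log (z + m)) ((y + m)⁻¹) y := by
    intro m _
    have : (0:ℝ) < y + m := by positivity
    exact (Real.hasDerivAt_log this.ne').comp_add_const y (m : ℝ)
  have h1 : HasDerivAt (fun z => Real.BohrMollerup.logGammaSeq z n)
      (Real.log n - ∑ m ∈ range (n + 1), (y + m)⁻¹) y := by
    unfold Real.BohrMollerup.logGammaSeq
    exact ((hasDerivAt_mul_const (Real.log n)).add_const _).sub (HasDerivAt.fun_sum hsum)
  convert h1 using 1
  rw [Finset.sum_sub_distrib]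
  have hh : (harmonic (n + 1) : ℝ) = ∑ m ∈ range (n + 1), ((m : ℝ) + 1)⁻¹ := by
    rw [harmonic]
    push_cast
    rfl
  rw [hh]
  ring

lemma hasDerivAt_logGamma {x : ℝ} (hx : 0 < x) :
    HasDerivAt (fun y => Real.log (Real.Gamma y)) (Dg x) x := by
  have hl : 0 < x / 2 := by linarith
  have hu : 0 < x + 1 := by linarith
  have hmem : x ∈ Set.Ioo (x / 2) (x + 1) := by constructor <;> linarith
  apply hasDerivAt_of_tendstoUniformlyOn (l := atTop) (f := fun (n : ℕ) (y : ℝ) => Real.BohrMollerup.logGammaSeq y n)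
    (f' := fun (n : ℕ) (y : ℝ) => (Real.log n - (harmonic (n + 1) : ℝ))
        - ∑ m ∈ range (n + 1), ((y + m)⁻¹ - ((m : ℝ) + 1)⁻¹))
    (isOpen_Ioo (a := x / 2) (b := x + 1)) ?_ ?_ ?_ hmem
  · -- uniform convergence
    have h1 : TendstoUniformlyOn (fun (n : ℕ) (_ : ℝ) => Real.log n - (harmonic (n + 1) : ℝ))
        (fun _ => -Real.eulerMascheroniConstant) atTop (Set.Ioo (x / 2) (x + 1)) :=
      tendsto_c.tendstoUniformlyOn_const _
    have h2 : TendstoUniformlyOn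
        (fun (N : ℕ) (y : ℝ) => ∑ m ∈ range N, ((y + m)⁻¹ - ((m : ℝ) + 1)⁻¹))
        (fun y => ∑' m : ℕ, ((y + m)⁻¹ - ((m : ℝ) + 1)⁻¹)) atTop (Set.Ioo (x / 2) (x + 1)) := by
      apply tendstoUniformlyOn_tsum_nat
        (u := fun m : ℕ => (1 + (x + 1)) * ((x / 2 + m) * ((m : ℝ) + 1))⁻¹)
        ((summable_lm hl).mul_left _)
      exact fun m y hy => term_bound hl hy m
    have h2' : TendstoUniformlyOn
        (fun (n : ℕ) (y : ℝ) => ∑ m ∈ range (n + 1), ((y + m)⁻¹ - ((m : ℝ) + 1)⁻¹))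
        (fun y => ∑' m : ℕ, ((y + m)⁻¹ - ((m : ℝ) + 1)⁻¹)) atTop (Set.Ioo (x / 2) (x + 1)) := by
      rw [Metric.tendstoUniformlyOn_iff] at h2 ⊢
      intro ε hε
      exact (tendsto_add_atTop_nat 1).eventually (h2 ε hε)
    exact h1.sub h2'
  · exact Eventually.of_forall fun n y hy => hasDerivAt_logGammaSeq n (lt_trans hl hy.1)
  · exact fun y hy => Real.BohrMollerup.tendsto_log_gamma (lt_trans hl hy.1)

lemma digamma_eq {x : ℝ} (hx : 0 < x) : digamma x = Dg x :=
  (hasDerivAt_logGamma hx).deriv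

lemma hasDerivAt_Dg {x : ℝ} (hx : 0 < x) : HasDerivAt Dg (Sf 2 x) x := by
  have hl : 0 < x / 2 := by linarith
  have hmem : x ∈ Set.Ioo (x / 2) (x + 1) := by constructor <;> linarith
  have key := hasDerivAt_tsum_of_isPreconnected
    (F := ℝ) (u := fun m : ℕ => ((x / 2 + m) ^ 2)⁻¹)
    (g := fun (m : ℕ) (y : ℝ) => ((y + m)⁻¹ - ((m : ℝ) + 1)⁻¹))
    (g' := fun (m : ℕ) (y : ℝ) => -((y + m) ^ 2)⁻¹)
    (summable_Sf hl (le_refl 2))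
    (isOpen_Ioo (a := x / 2) (b := x + 1)) (convex_Ioo _ _).isPreconnected
    (fun m y hy => ?_) (fun m y hy => ?_) hmem (summable_term hx) hmem
  · have hD : HasDerivAt Dg (-(∑' m : ℕ, -((x + m) ^ 2)⁻¹)) x := by
      unfold Dg
      exact key.const_sub _
    rw [tsum_neg, neg_neg] at hD
    exact hD
  · have hz : (0:ℝ) < y + m := by
      have : (0:ℝ) ≤ (m:ℝ) := Nat.cast_nonneg m
      have := hy.1; nlinarith
    have h := (((hasDerivAt_id y).add_const (m : ℝ)).inv hz.ne').sub_const ((m : ℝ) + 1)⁻¹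
    convert h using 1
    · rfl
    field_simp
    rw [id_eq, div_self (pow_ne_zero 2 hz.ne')]
  · have hz : (0:ℝ) < y + m := by
      have : (0:ℝ) ≤ (m:ℝ) := Nat.cast_nonneg m
      have := hy.1; nlinarith
    rw [norm_neg, Real.norm_eq_abs, abs_inv, abs_of_pos (by positivity)]
    exact Sf_mono_le hl hy.1.le 2 m




lemma polygamma_eq {p : ℕ} (hp : 1 ≤ p) :
    ∀ {x : ℝ}, 0 < x → polygamma p x = (-1 : ℝ) ^ (p + 1) * p.factorial * Sf (p + 1) x := by
  induction p, hp using Nat.le_induction with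
  | base =>
    intro x hx
    have h1 : polygamma 1 x = deriv digamma x := by
      simp [polygamma]
    have h2 : digamma =ᶠ[𝓝 x] Dg :=
      Filter.eventuallyEq_of_mem (Ioi_mem_nhds hx) fun y hy => digamma_eq hy
    rw [h1, h2.deriv_eq, (hasDerivAt_Dg hx).deriv]
    norm_num
  | succ p hp ih =>
    intro x hx
    have h1 : polygamma (p + 1) x = deriv (polygamma p) x := by
      rw [polygamma, Function.iterate_succ_apply', ← polygamma]
    have h2 : polygamma p =ᶠ[𝓝 x] fun y => (-1 : ℝ) ^ (p + 1) * p.factorial * Sf (p + 1) y :=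
      Filter.eventuallyEq_of_mem (Ioi_mem_nhds hx) fun y hy => ih hy
    have h3 : HasDerivAt (fun y => (-1 : ℝ) ^ (p + 1) * p.factorial * Sf (p + 1) y)
        ((-1 : ℝ) ^ (p + 1) * p.factorial * (-((p : ℝ) + 1) * Sf (p + 2) x)) x := by
      have := (hasDerivAt_Sf (m := p + 1) (by omega) hx).const_mul
        ((-1 : ℝ) ^ (p + 1) * p.factorial)
      convert this using 2
      · rfl
      · rfl
      push_cast; ring
    rw [h1, h2.deriv_eq, h3.deriv]
    rw [Nat.factorial_succ]
    push_cast
    ring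

noncomputable def Gf (a : ℝ) (k n : ℕ) (y : ℝ) : ℝ :=
  ((k + n).factorial : ℝ) * (Sf (k + n + 1) y - Sf (k + n + 1) (y + a))
    + a * ((k + n).factorial : ℝ) * (y ^ (k + n + 1))⁻¹

lemma hasDerivAt_Gf {a : ℝ} (ha : 0 < a) (k n : ℕ) {x : ℝ} (hx : 0 < x) (hk : 1 ≤ k) :
    HasDerivAt (Gf a k n) (-Gf a k (n + 1) x) x := by
  set K := k + n + 1 with hK
  have hK2 : 2 ≤ K := by omega
  have h1 := hasDerivAt_Sf hK2 hx
  have h2 : HasDerivAt (fun y => Sf K (y + a)) (-(K : ℝ) * Sf (K + 1) (x + a)) x :=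
    (hasDerivAt_Sf hK2 (by linarith)).comp_add_const x a
  have h3 := hasDerivAt_inv_pow (m := K) (by omega) hx
  have total := ((h1.sub h2).const_mul ((k + n).factorial : ℝ)).add
    (h3.const_mul (a * ((k + n).factorial : ℝ)))
  have hfun : Gf a k n = fun y => ((k + n).factorial : ℝ) * (Sf K y - Sf K (y + a))
      + a * ((k + n).factorial : ℝ) * (y ^ K)⁻¹ := rfl
  rw [hfun]
  convert total using 1
  · rfl
  · rfl
  · rfl
  have he : k + (n + 1) = K := by omega
  have he1 : k + (n + 1) + 1 = K + 1 := by omega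
  rw [Gf, he]
  have hf : (K.factorial : ℝ) = (K : ℝ) * ((k + n).factorial : ℝ) := by
    rw [hK, Nat.factorial_succ]
    push_cast
    ring
  rw [hf]
  ring

lemma Gf_pos {a : ℝ} (ha : 0 < a) (k n : ℕ) (hk : 1 ≤ k) {x : ℝ} (hx : 0 < x) :
    0 < Gf a k n x := by
  have hK2 : 2 ≤ k + n + 1 := by omega
  have h1 : Sf (k + n + 1) (x + a) ≤ Sf (k + n + 1) x := by
    apply Summable.tsum_le_tsum _ (summable_Sf (by linarith : (0:ℝ) < x + a) hK2) (summable_Sf hx hK2)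
    intro j
    apply inv_anti₀ (by positivity)
    apply pow_le_pow_left₀ (by positivity)
    linarith
  have h2 : (0:ℝ) < a * ((k + n).factorial : ℝ) * (x ^ (k + n + 1))⁻¹ := by
    have : (0:ℝ) < ((k + n).factorial : ℝ) := by
      exact_mod_cast Nat.factorial_pos _
    positivity
  have h3 : (0:ℝ) ≤ ((k + n).factorial : ℝ) * (Sf (k + n + 1) x - Sf (k + n + 1) (x + a)) := by
    apply mul_nonneg (Nat.cast_nonneg _)
    linarith
  rw [Gf]
  linarith

theorem stmt_15 (a : ℝ) (ha : a ∈ Set.Ioo (0:ℝ) 1) (k : ℕ) (hk : Odd k)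
    (n : ℕ) (x : ℝ) (hx : 0 < x) :
    0 < (-1) ^ n *
      deriv^[n] (fun y : ℝ =>
        -(polygamma k (y + a) - polygamma k y - a * (Nat.factorial k : ℝ) / y ^ (k + 1))) x := by
  obtain ⟨ha0, ha1⟩ := ha
  have hk1 : 1 ≤ k := hk.pos
  have key : ∀ m : ℕ, ∀ z : ℝ, 0 < z →
      deriv^[m] (fun y : ℝ =>
        -(polygamma k (y + a) - polygamma k y - a * (Nat.factorial k : ℝ) / y ^ (k + 1))) z
      = (-1 : ℝ) ^ m * Gf a k m z := by
    intro m
    induction m with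
    | zero =>
      intro z hz
      simp only [Function.iterate_zero, id_eq, pow_zero, one_mul]
      rw [polygamma_eq hk1 (by linarith : (0:ℝ) < z + a), polygamma_eq hk1 hz]
      have hev : (-1 : ℝ) ^ (k + 1) = 1 := (hk.add_one).neg_one_pow
      rw [hev, Gf]
      rw [div_eq_mul_inv]
      push_cast [Nat.add_zero]
      ring
    | succ m ih =>
      intro z hz
      rw [Function.iterate_succ_apply']
      have h2 : deriv^[m] (fun y : ℝ =>
          -(polygamma k (y + a) - polygamma k y - a * (Nat.factorial k : ℝ) / y ^ (k + 1)))
          =ᶠ[𝓝 z] fun y => (-1 : ℝ) ^ m * Gf a k m y :=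
        Filter.eventuallyEq_of_mem (Ioi_mem_nhds hz) fun y hy => ih y hy
      rw [h2.deriv_eq]
      have h3 : HasDerivAt (fun y => (-1 : ℝ) ^ m * Gf a k m y)
          ((-1 : ℝ) ^ m * -Gf a k (m + 1) z) z :=
        (hasDerivAt_Gf ha0 k m hz hk1).const_mul _
      rw [h3.deriv, pow_succ]
      ring
  rw [key n x hx, ← mul_assoc, ← mul_pow]
  norm_num
  exact Gf_pos ha0 k n hk1 hx
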